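/- Let c > 1 be an integer, let a, b be integers with 0 ≤ a, b < c, and let d = (1−a−b) mod c. If the tetrahedron T_{a,b,c} is empty, then a + b + d = c + 1. -/
import Mathlib


/-- A point of `ℝ³` is a lattice point if all of its coordinates are integers. -/
def IsLatticePt (x : Fin 3 → ℝ) : Prop := ∀ i, ∃ m : ℤ, x i = (m : ℝ)

/-- The tetrahedron `T_{a,b,c}`: the convex hull of `(0,0,0)`, `(1,0,0)`, `(0,1,0)`, `(a,b,c)`. -/
def Tet (a b c : ℤ) : Set (Fin 3 → ℝ) :=
  convexHull ℝ {![0,0,0], ![1,0,0], ![0,1,0], ![(a : ℝ), (b : ℝ), (c : ℝ)]}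

/-- `T_{a,b,c}` is an empty lattice tetrahedron: it contains no point of `ℤ³`
other than its four vertices. -/
def TetIsEmpty (a b c : ℤ) : Prop :=
  ∀ x ∈ Tet a b c, IsLatticePt x →
    x = ![0,0,0] ∨ x = ![1,0,0] ∨ x = ![0,1,0] ∨ x = ![(a : ℝ), (b : ℝ), (c : ℝ)]

lemma mem_tet (a b c : ℤ) (w0 w1 w2 w3 : ℝ) (h0 : 0 ≤ w0) (h1 : 0 ≤ w1)
    (h2 : 0 ≤ w2) (h3 : 0 ≤ w3) (hsum : w0 + w1 + w2 + w3 = 1) :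
    (w0 • ![0,0,0] + w1 • ![1,0,0] + w2 • ![0,1,0] + w3 • ![(a : ℝ), (b : ℝ), (c : ℝ)])
      ∈ Tet a b c := by
  have hconv : Convex ℝ (Tet a b c) := convex_convexHull ℝ _
  have hz : ∀ i : Fin 4,
      (![![0,0,0], ![1,0,0], ![0,1,0], ![(a : ℝ), (b : ℝ), (c : ℝ)]] i) ∈ Tet a b c := by
    intro i
    fin_cases i <;> exact subset_convexHull ℝ _ (by simp [Set.mem_insert_iff])
  have := hconv.sum_mem (t := Finset.univ) (w := ![w0, w1, w2, w3])
    (z := ![![0,0,0], ![1,0,0], ![0,1,0], ![(a : ℝ), (b : ℝ), (c : ℝ)]])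
    (fun i _ => by fin_cases i <;> assumption)
    (by simp [Fin.sum_univ_four, hsum])
    (fun i _ => hz i)
  simpa [Fin.sum_univ_four] using this

/-- If `c > 1`, `0 ≤ a, b < c`, `d = (1 - a - b) mod c` and the tetrahedron `T_{a,b,c}` is
empty, then `a + b + d = c + 1`. -/
theorem stmt_13 (a b c d : ℤ) (hc : 1 < c) (ha : 0 ≤ a) (hac : a < c) (hb : 0 ≤ b)
    (hbc : b < c) (hd : d = (1 - a - b) % c)
    (hempty : TetIsEmpty a b c) :
    a + b + d = c + 1 := by
  have hcpos : (0 : ℤ) < c := by omega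
  set q : ℤ := (1 - a - b) / c with hqdef
  have hq : 1 - a - b = c * q + d := by
    rw [hd, hqdef]; exact (Int.mul_ediv_add_emod _ _).symm
  have hd0 : 0 ≤ d := by rw [hd]; exact Int.emod_nonneg _ (by omega)
  have hdc : d < c := by rw [hd]; exact Int.emod_lt_of_pos _ hcpos
  have hC : (1 : ℝ) < (c : ℝ) := by exact_mod_cast hc
  have hqcases : q = 0 ∨ q = -1 ∨ q = -2 := by
    have h1 : q < 1 := by
      by_contra h; push_neg at h
      have : c ≤ c * q := le_mul_of_one_le_right (le_of_lt hcpos) h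
      omega
    have h2 : -3 < q := by
      by_contra h; push_neg at h
      have hmul : c * q ≤ -3 * c := by
        calc c * q ≤ c * (-3) := mul_le_mul_of_nonneg_left h (le_of_lt hcpos)
          _ = -3 * c := by ring
      omega
    omega
  rcases hqcases with hq0 | hq1 | hq2
  · -- q = 0
    rw [hq0, mul_zero] at hq
    exfalso
    have hab : a + b ≤ 1 := by omega
    have habR : (a : ℝ) + (b : ℝ) ≤ 1 := by exact_mod_cast hab
    have hA0 : (0:ℝ) ≤ (a:ℝ) := by exact_mod_cast ha
    have hB0 : (0:ℝ) ≤ (b:ℝ) := by exact_mod_cast hb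
    set C := (c : ℝ)
    set A := (a : ℝ)
    set B := (b : ℝ)
    have hx := mem_tet a b c ((C-1)*(1-A-B)/C) (A*(C-1)/C) (B*(C-1)/C) (1/C)
      (by apply div_nonneg; · apply mul_nonneg <;> linarith
          · linarith)
      (by apply div_nonneg; · apply mul_nonneg <;> linarith
          · linarith)
      (by apply div_nonneg; · apply mul_nonneg <;> linarith
          · linarith)
      (by positivity)
      (by field_simp; ring)
    have hxeq : ((C-1)*(1-A-B)/C) • ![(0:ℝ),0,0] + (A*(C-1)/C) • ![1,0,0]
        + (B*(C-1)/C) • ![0,1,0] + (1/C) • ![A, B, C] = ![A, B, 1] := by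
      funext i
      fin_cases i <;> simp [Matrix.smul_cons] <;> field_simp <;> ring
    rw [hxeq] at hx
    have hlat : IsLatticePt ![A, B, 1] := by
      intro i
      fin_cases i
      · exact ⟨a, by simp [A]⟩
      · exact ⟨b, by simp [B]⟩
      · exact ⟨1, by simp⟩
    rcases hempty _ hx hlat with h | h | h | h
    · have := congrFun h 2; simp at this
    · have := congrFun h 2; simp at this
    · have := congrFun h 2; simp at this
    · have h2 := congrFun h 2
      simp at h2
      have : c = 1 := by exact_mod_cast h2.symm
      omega
  · rw [hq1, mul_neg_one] at hq; omega
  · -- q = -2 :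
    replace hq : 1 - a - b = -(2 * c) + d := by rw [hq2] at hq; linear_combination hq
    exfalso
    have hab : c + 2 ≤ a + b := by omega
    have habR : (c : ℝ) + 2 ≤ (a : ℝ) + (b : ℝ) := by exact_mod_cast hab
    have hAC : (a:ℝ) < (c:ℝ) := by exact_mod_cast hac
    have hBC : (b:ℝ) < (c:ℝ) := by exact_mod_cast hbc
    set C := (c : ℝ)
    set A := (a : ℝ)
    set B := (b : ℝ)
    have hx := mem_tet a b c ((A+B-C-1)/C) ((C-A)/C) ((C-B)/C) (1/C)
      (by apply div_nonneg <;> linarith)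
      (by apply div_nonneg <;> linarith)
      (by apply div_nonneg <;> linarith)
      (by positivity)
      (by field_simp; ring)
    have hxeq : ((A+B-C-1)/C) • ![(0:ℝ),0,0] + ((C-A)/C) • ![1,0,0]
        + ((C-B)/C) • ![0,1,0] + (1/C) • ![A, B, C] = ![1, 1, 1] := by
      funext i
      fin_cases i <;> simp [Matrix.smul_cons] <;> field_simp <;> ring
    rw [hxeq] at hx
    have hlat : IsLatticePt ![1, 1, 1] := by
      intro i; fin_cases i <;> exact ⟨1, by simp⟩
    rcases hempty _ hx hlat with h | h | h | h
    · have := congrFun h 2; simp at this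
    · have := congrFun h 1; simp at this
    · have := congrFun h 0; simp at this
    · have h2 := congrFun h 2
      simp at h2
      have : c = 1 := by exact_mod_cast h2.symm
      omega
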